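/- Under the standing setup, let 𝓗 be a sparse ear decomposition in G and let F = v_0 v_1 ⋯ v_n v_0 be an appendage of 𝓗. Then the induced subgraph G[V(F)] contains a long hole. -/

import Mathlib

open SimpleGraph

variable {V : Type}

/-- The graph `G − S`: delete the vertices in `S` (keep the same vertex type; deleted
vertices become isolated). -/
def SimpleGraph.del (G : SimpleGraph V) (S : Set V) : SimpleGraph V where
  Adj x y := G.Adj x y ∧ x ∉ S ∧ y ∉ S
  symm := by
    constructor
    intro x y h
    exact ⟨h.1.symm, h.2.2, h.2.1⟩
  loopless := by
    constructor
    intro x h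
    exact G.loopless.irrefl x h.1

theorem SimpleGraph.del_le (G : SimpleGraph V) (S : Set V) : G.del S ≤ G := by
  intro x y h
  exact h.1

/-- The closed neighborhood `N_G[S]` of a set of vertices. -/
def closedNbhd (G : SimpleGraph V) (S : Set V) : Set V :=
  S ∪ {x | ∃ s ∈ S, G.Adj x s}

/-- A hole: an induced (chordless) cycle of length at least 4, given as a closed walk. -/
def IsHoleW (G : SimpleGraph V) {v : V} (w : G.Walk v v) : Prop :=
  w.IsCycle ∧ 4 ≤ w.length ∧
    ∀ x ∈ w.support, ∀ y ∈ w.support, G.Adj x y → w.toSubgraph.Adj x y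

/-- A long hole: an induced (chordless) cycle of length at least 6. -/
def IsLongHoleW (G : SimpleGraph V) {v : V} (w : G.Walk v v) : Prop :=
  w.IsCycle ∧ 6 ≤ w.length ∧
    ∀ x ∈ w.support, ∀ y ∈ w.support, G.Adj x y → w.toSubgraph.Adj x y

/-- A graph is `C4`-free if it has no induced cycle of length 4. -/
def C4Free (G : SimpleGraph V) : Prop :=
  ¬ ∃ (v : V) (w : G.Walk v v), w.IsCycle ∧ w.length = 4 ∧
      ∀ x ∈ w.support, ∀ y ∈ w.support, G.Adj x y → w.toSubgraph.Adj x y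

def NoLongHole (G : SimpleGraph V) : Prop :=
  ∀ (v : V) (w : G.Walk v v), ¬ IsLongHoleW G w

def NoHole (G : SimpleGraph V) : Prop :=
  ∀ (v : V) (w : G.Walk v v), ¬ IsHoleW G w

/-- `s_k = 4k(log k + log log k + 4)` for `k ≥ 2`, and `s_1 = 2`. -/
noncomputable def sK (k : ℕ) : ℝ :=
  if 2 ≤ k then 4 * k * (Real.log k + Real.log (Real.log k) + 4) else 2

/-- `μ_k = 88575 k + 24003 s_k`. -/
noncomputable def muK (k : ℕ) : ℝ := 88575 * k + 24003 * sK k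

/-- `G` contains `k` pairwise vertex-disjoint long holes. -/
def HasLongHolePacking (G : SimpleGraph V) (k : ℕ) : Prop :=
  ∃ (a : Fin k → V) (w : (i : Fin k) → G.Walk (a i) (a i)),
    (∀ i, IsLongHoleW G (w i)) ∧
    ∀ i j, i ≠ j → ∀ x ∈ (w i).support, x ∉ (w j).support

/-- `G` contains `k` pairwise vertex-disjoint holes. -/
def HasHolePacking (G : SimpleGraph V) (k : ℕ) : Prop :=
  ∃ (a : Fin k → V) (w : (i : Fin k) → G.Walk (a i) (a i)),
    (∀ i, IsHoleW G (w i)) ∧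
    ∀ i j, i ≠ j → ∀ x ∈ (w i).support, x ∉ (w j).support

/-- The distance between two vertices measured in the cycle `C` (given as a closed walk `c`). -/
noncomputable def distW (G : SimpleGraph V) {v0 : V} (c : G.Walk v0 v0) (x y : V) : ℕ :=
  c.toSubgraph.spanningCoe.dist x y

/-- A vertex `u ∉ V(C)` is almost `C`-dominating: it has at least two neighbors on `C`, and
its neighbors on `C` can be enumerated cyclically so that consecutive ones are at
`C`-distance 1 or 3. -/
def AlmostDom (G : SimpleGraph V) {v0 : V} (c : G.Walk v0 v0) (u : V) : Prop :=
  u ∉ c.support ∧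
  ∃ l : List V, l.Nodup ∧ 2 ≤ l.length ∧
    (∀ x, x ∈ l ↔ x ∈ c.support ∧ G.Adj u x) ∧
    ∀ i : Fin l.length,
      distW G c (l.get i) (l.get ⟨((i : ℕ) + 1) % l.length, Nat.mod_lt _ i.pos⟩)
        ∈ ({1, 3} : Set ℕ)

/-- Data for an ear decomposition of a subgraph of `G`: `n` ears, the `i`-th one being a
walk from `A i` to `B i`. -/
structure EarData (G : SimpleGraph V) : Type _ where
  n : ℕ
  A : Fin n → V
  B : Fin n → V
  ear : (i : Fin n) → G.Walk (A i) (B i)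

/-- The subgraph `C ∪ P_1 ∪ ⋯ ∪ P_j` (ears of index `< j`). -/
def EarData.prev {G : SimpleGraph V} (d : EarData G) {v0 : V} (c : G.Walk v0 v0) (j : ℕ) :
    G.Subgraph :=
  c.toSubgraph ⊔ ⨆ i : Fin d.n, ⨆ _ : (i : ℕ) < j, (d.ear i).toSubgraph

/-- The subgraph `C ∪ P_1 ∪ ⋯ ∪ P_ℓ`. -/
def EarData.whole {G : SimpleGraph V} (d : EarData G) {v0 : V} (c : G.Walk v0 v0) :
    G.Subgraph :=
  d.prev c d.n

/-- A subgraph has maximum degree at most 3. -/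
def MaxDeg3 {G : SimpleGraph V} (H : G.Subgraph) : Prop :=
  ∀ v : V, (H.neighborSet v).ncard ≤ 3

/-- `p` qualifies as an ear attached to the subgraph `H` (relative to the cycle `c`):
`p = p_0 ⋯ p_m` is a path of length `m ≥ 6` with `p_0 ∈ V(C)`, its other end in `H`,
all internal vertices outside `H`, `p − {p_0, p_m}` induced in `G`, and no vertex of
`{p_2, p_3, p_4}` has a neighbor in `H`. -/
def IsEarOf (G : SimpleGraph V) {v0 : V} (c : G.Walk v0 v0) (H : G.Subgraph)
    {a b : V} (p : G.Walk a b) : Prop :=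
  p.IsPath ∧ 6 ≤ p.length ∧ a ∈ c.support ∧ b ∈ H.verts ∧
  (∀ x ∈ p.support, x ≠ a → x ≠ b → x ∉ H.verts) ∧
  (∀ x ∈ p.support, x ≠ a → x ≠ b → ∀ y ∈ p.support, y ≠ a → y ≠ b →
      G.Adj x y → p.toSubgraph.Adj x y) ∧
  (∀ j ∈ ({2, 3, 4} : Set ℕ), ∀ y ∈ H.verts, ¬ G.Adj (p.getVert j) y)

/-- `d` is a sparse ear decomposition in `G` (relative to the cycle `c`). -/
def IsSED (G : SimpleGraph V) {v0 : V} (c : G.Walk v0 v0) (d : EarData G) : Prop :=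
  MaxDeg3 (d.whole c) ∧ ∀ i : Fin d.n, IsEarOf G c (d.prev c (i : ℕ)) (d.ear i)

/-- The path `p` extends the sparse ear decomposition `d`: adding `p` as a new ear again
gives a sparse ear decomposition. -/
def ExtendsSED (G : SimpleGraph V) {v0 : V} (c : G.Walk v0 v0) (d : EarData G)
    {a b : V} (p : G.Walk a b) : Prop :=
  IsEarOf G c (d.whole c) p ∧ MaxDeg3 (d.whole c ⊔ p.toSubgraph)

/-- A good sparse ear decomposition: each ear extends the previous partial decomposition,
meets `C` in as many vertices as possible, and subject to that is shortest. -/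
def GoodSED (G : SimpleGraph V) {v0 : V} (c : G.Walk v0 v0) (d : EarData G) : Prop :=
  IsSED G c d ∧ ∀ i : Fin d.n,
    (∀ (x y : V) (q : G.Walk x y),
        IsEarOf G c (d.prev c (i : ℕ)) q → MaxDeg3 (d.prev c (i : ℕ) ⊔ q.toSubgraph) →
          ({z | z ∈ q.support ∧ z ∈ c.support}).ncard ≤
            ({z | z ∈ (d.ear i).support ∧ z ∈ c.support}).ncard) ∧
    (∀ (x y : V) (q : G.Walk x y),
        IsEarOf G c (d.prev c (i : ℕ)) q → MaxDeg3 (d.prev c (i : ℕ) ⊔ q.toSubgraph) →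
          ({z | z ∈ q.support ∧ z ∈ c.support}).ncard =
            ({z | z ∈ (d.ear i).support ∧ z ∈ c.support}).ncard →
          (d.ear i).length ≤ q.length)

/-- An appendage of the sparse ear decomposition `d`: a cycle `F = v_0 v_1 ⋯ v_n v_0`
(`n ≥ 5`) whose tip `v_0 = t` is a non-branching vertex of `C`, meeting the decomposition
only in `t`, with `v_1 ⋯ v_n` induced in `G` and no vertex of `{v_2, v_3, v_4}` having a
neighbor in the decomposition. -/
def IsAppendage (G : SimpleGraph V) {v0 : V} (c : G.Walk v0 v0) (d : EarData G)
    {t : V} (F : G.Walk t t) : Prop :=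
  F.IsCycle ∧ 6 ≤ F.length ∧ t ∈ c.support ∧
  ((d.whole c).neighborSet t).ncard ≠ 3 ∧
  (∀ x ∈ F.support, x ∈ (d.whole c).verts → x = t) ∧
  (∀ x ∈ F.support, x ≠ t → ∀ y ∈ F.support, y ≠ t → G.Adj x y → F.toSubgraph.Adj x y) ∧
  (∀ j ∈ ({2, 3, 4} : Set ℕ), ∀ y ∈ (d.whole c).verts, ¬ G.Adj (F.getVert j) y)

/-- `S^r_v`: the set of vertices at distance at most `r` from `v ∈ V(C)` in the graph
`G − (D ∪ (V(C) ∖ {v}))`, where `D` is the set of almost `C`-dominating vertices. -/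
def Sball (G : SimpleGraph V) {v0 : V} (c : G.Walk v0 v0) (r : ℕ) (v : V) : Set V :=
  {x | ∃ p : (G.del ({u | AlmostDom G c u} ∪ ({y | y ∈ c.support} \ {v}))).Walk v x,
        p.length ≤ r}

/-- `S^r_X = ⋃_{v ∈ X} S^r_v`. -/
def SsetOf (G : SimpleGraph V) {v0 : V} (c : G.Walk v0 v0) (r : ℕ) (X : Set V) : Set V :=
  ⋃ v ∈ X, Sball G c r v

namespace SimpleGraph.Walk

variable {G : SimpleGraph V}

/-- The prefix of a walk consisting of its first `n` edges (or the whole walk). -/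
def wtake {u v : V} : (p : G.Walk u v) → (n : ℕ) → G.Walk u (p.getVert n)
  | .nil, _ => Walk.nil
  | .cons _ _, 0 => Walk.nil
  | .cons h q, n + 1 => Walk.cons h (wtake q n)

lemma length_wtake {u v : V} :
    ∀ (p : G.Walk u v) (n : ℕ), (p.wtake n).length = min n p.length
  | .nil, _ => by simp [wtake]
  | .cons _ _, 0 => by simp [wtake]; rfl
  | .cons h q, n + 1 => by
      change (q.wtake n).length + 1 = min (n + 1) (q.length + 1)
      rw [length_wtake q n]
      omega

lemma getVert_wtake {u v : V} :
    ∀ (p : G.Walk u v) (n i : ℕ), i ≤ n → (p.wtake n).getVert i = p.getVert i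
  | .nil, _, _, _ => by simp [wtake, getVert_of_length_le]
  | .cons _ _, 0, i, hi => by
      have : i = 0 := by omega
      subst this; simp [wtake]; rfl
  | .cons h q, n + 1, 0, _ => by simp [wtake]
  | .cons h q, n + 1, i + 1, hi => by
      simpa [wtake, getVert_cons_succ] using getVert_wtake q n i (by omega)

lemma support_wtake {u v : V} :
    ∀ (p : G.Walk u v) (n : ℕ), (p.wtake n).support = p.support.take (n + 1)
  | .nil, n => by simp [wtake]
  | .cons h q, 0 => by simp [wtake]; rfl
  | .cons h q, n + 1 => by
      simp [wtake, support_cons, support_wtake q n]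

lemma getVert_injOn_path {u v : V} {p : G.Walk u v} (hp : p.IsPath) :
    ∀ a b : ℕ, a ≤ p.length → b ≤ p.length → p.getVert a = p.getVert b → a = b := by
  induction p with
  | nil => intro a b ha hb _; simp only [length_nil, Nat.le_zero] at ha hb; omega
  | @cons u x v h q ih =>
    intro a b ha hb heq
    rw [cons_isPath_iff] at hp
    match a, b with
    | 0, 0 => rfl
    | 0, b + 1 =>
      exfalso
      apply hp.2
      have heq' : u = q.getVert b := heq
      exact mem_support_iff_exists_getVert.mpr ⟨b, heq'.symm, by simpa using hb⟩
    | a + 1, 0 =>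
      exfalso
      apply hp.2
      have heq' : q.getVert a = u := heq
      exact mem_support_iff_exists_getVert.mpr ⟨a, heq', by simpa using ha⟩
    | a + 1, b + 1 =>
      have := ih hp.1 a b (by simpa using ha) (by simpa using hb) heq
      omega

lemma getVert_injOn_cycle {u : V} {p : G.Walk u u} (hc : p.IsCycle) :
    ∀ a b : ℕ, 1 ≤ a → a ≤ p.length → 1 ≤ b → b ≤ p.length →
      p.getVert a = p.getVert b → a = b := by
  have h3 := hc.three_le_length
  have hnn : ¬ p.Nil := by rw [nil_iff_length_eq]; omega
  have htail : p.tail.IsPath := IsPath.mk' (by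
    rw [support_tail_of_not_nil _ hnn]; exact hc.support_nodup)
  have hl := length_tail_add_one hnn
  intro a b ha ha' hb hb' h
  have ga : p.tail.getVert (a - 1) = p.getVert a := by
    rw [getVert_tail _]; congr 1; omega
  have gb : p.tail.getVert (b - 1) = p.getVert b := by
    rw [getVert_tail _]; congr 1; omega
  have := getVert_injOn_path htail (a - 1) (b - 1) (by omega) (by omega)
    (by rw [ga, gb]; exact h)
  omega

lemma getVert_ne_fst_of_cycle {u : V} {p : G.Walk u u} (hc : p.IsCycle)
    {a : ℕ} (ha : 1 ≤ a) (ha' : a ≤ p.length - 1) : p.getVert a ≠ u := by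
  have h3 := hc.three_le_length
  intro hcon
  have : p.getVert a = p.getVert p.length := by rw [hcon, getVert_length]
  have := getVert_injOn_cycle hc a p.length ha (by omega) (by omega) le_rfl this
  omega

end SimpleGraph.Walk

theorem statement_15
    [Fintype V] (G : SimpleGraph V) (k : ℕ) (hk : 1 ≤ k) (h4 : C4Free G)
    (v0 : V) (c : G.Walk v0 v0) (hc : IsLongHoleW G c)
    (hshort : ∀ (u : V) (w : G.Walk u u), IsLongHoleW G w → c.length ≤ w.length)
    (hbig : muK k < (c.length : ℝ))
    (hnone : NoLongHole (G.del {x | x ∈ c.support}))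
    (d : EarData G) (hd : IsSED G c d)
    (t : V) (F : G.Walk t t) (hF : IsAppendage G c d F) :
    ∃ (u : V) (w : G.Walk u u), IsLongHoleW G w ∧ ∀ x ∈ w.support, x ∈ F.support := by
  classical
  obtain ⟨hcyc, hlen, htc, -, -, hind, h234⟩ := hF
  set n := F.length with hn
  have hn6 : 6 ≤ n := hlen
  have ht : t ∈ (d.whole c).verts :=
    Set.mem_union_left _ ((Walk.mem_verts_toSubgraph c).mpr htc)
  have hinj := Walk.getVert_injOn_cycle hcyc
  have hnt : ∀ a : ℕ, 1 ≤ a → a ≤ n - 1 → F.getVert a ≠ t :=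
    fun a ha ha' => Walk.getVert_ne_fst_of_cycle hcyc ha ha'
  by_cases hch : ∃ b : ℕ, 2 ≤ b ∧ b ≤ n - 2 ∧ G.Adj t (F.getVert b)
  · -- there is a chord at t; take the minimal one
    set j := Nat.find hch with hj
    obtain ⟨hj2, hjn, hjadj⟩ := Nat.find_spec hch
    have hjmin : ∀ b : ℕ, 2 ≤ b → b ≤ n - 2 → G.Adj t (F.getVert b) → j ≤ b :=
      fun b h1 h2 h3 => Nat.find_min' hch ⟨h1, h2, h3⟩
    have hj5 : 5 ≤ j := by
      have h2' : j ≠ 2 := fun h => h234 2 (by simp) t ht (by rw [← h]; exact hjadj.symm)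
      have h3' : j ≠ 3 := fun h => h234 3 (by simp) t ht (by rw [← h]; exact hjadj.symm)
      have h4' : j ≠ 4 := fun h => h234 4 (by simp) t ht (by rw [← h]; exact hjadj.symm)
      omega
    set p := F.wtake j with hp
    have hplen : p.length = j := by
      rw [hp, Walk.length_wtake]; omega
    have hpget : ∀ i : ℕ, i ≤ j → p.getVert i = F.getVert i :=
      fun i hi => Walk.getVert_wtake F j i hi
    -- t does not occur in the tail of p
    have hnnp : ¬ p.Nil := by rw [Walk.nil_iff_length_eq, hplen]; omega
    have htps : t ∉ p.support.tail := by
      intro hmem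
      rw [← Walk.support_tail_of_not_nil p hnnp] at hmem
      obtain ⟨i, hiv, hil⟩ := Walk.mem_support_iff_exists_getVert.mp hmem
      rw [Walk.getVert_tail _, hpget (i + 1) (by
        have := Walk.length_tail_add_one hnnp; omega)] at hiv
      have hil' : i + 1 ≤ j := by have := Walk.length_tail_add_one hnnp; omega
      exact hnt (i + 1) (by omega) (by omega) hiv
    -- p is a path
    have hptail : p.support.tail.Nodup := by
      have h1 : p.support = F.support.take (j + 1) := Walk.support_wtake F j
      have h2 : F.support = t :: F.support.tail := Walk.support_eq_cons F
      rw [h1, h2, List.take_succ_cons, List.tail_cons]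
      exact (List.take_sublist _ _).nodup hcyc.support_nodup
    have hppath : p.IsPath := Walk.IsPath.mk' (by
      rw [Walk.support_eq_cons]
      exact List.nodup_cons.mpr ⟨htps, hptail⟩)
    -- the chord edge is not an edge of p
    have hedge : s(t, F.getVert j) ∉ p.edges := by
      intro he
      have hadjsub : p.toSubgraph.Adj t (F.getVert j) :=
        (Subgraph.mem_edgeSet).mp ((Walk.mem_edges_toSubgraph p).mpr he)
      obtain ⟨i, hie, hil⟩ := (Walk.toSubgraph_adj_iff p).mp hadjsub
      rw [hplen] at hil
      rw [hpget i (by omega), hpget (i + 1) (by omega)] at hie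
      rcases Sym2.eq_iff.mp hie with ⟨h1, h2⟩ | ⟨h1, h2⟩
      · -- F.getVert i = t with i < j and F.getVert (i+1) = F.getVert j
        rcases Nat.eq_zero_or_pos i with hi0 | hi0
        · subst hi0
          have : (1 : ℕ) = j := hinj 1 j (by omega) (by omega) (by omega) (by omega) h2
          omega
        · exact hnt i (by omega) (by omega) h1
      · exact hnt (i + 1) (by omega) (by omega) h2
    -- assemble the cycle w = t v₁ ⋯ v_j t
    refine ⟨t, Walk.cons hjadj p.reverse, ⟨?_, ?_, ?_⟩, ?_⟩
    · rw [Walk.cons_isCycle_iff]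
      constructor
      · exact (Walk.isPath_reverse_iff p).mpr hppath
      · rw [Walk.edges_reverse, List.mem_reverse]; exact hedge
    · simp only [Walk.length_cons, Walk.length_reverse, hplen]; omega
    · -- chordless
      have hmemw : ∀ x, x ∈ (Walk.cons hjadj p.reverse).support ↔
          ∃ i : ℕ, i ≤ j ∧ F.getVert i = x := by
        intro x
        simp only [Walk.support_cons, List.mem_cons, Walk.support_reverse, List.mem_reverse]
        constructor
        · rintro (rfl | hxp)
          · exact ⟨0, by omega, F.getVert_zero⟩
          · obtain ⟨i, hiv, hil⟩ := Walk.mem_support_iff_exists_getVert.mp hxp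
            rw [hplen] at hil
            exact ⟨i, hil, by rw [← hpget i hil]; exact hiv⟩
        · rintro ⟨i, hij, rfl⟩
          rcases Nat.eq_zero_or_pos i with rfl | hi0
          · left; exact F.getVert_zero
          · right
            exact Walk.mem_support_iff_exists_getVert.mpr
              ⟨i, (hpget i hij).symm ▸ rfl, by omega⟩
      have hwSub : ∀ i : ℕ, i < j →
          (Walk.cons hjadj p.reverse).toSubgraph.Adj (F.getVert i) (F.getVert (i + 1)) := by
        intro i hij
        have h1 : p.toSubgraph.Adj (p.getVert i) (p.getVert (i + 1)) :=
          Walk.toSubgraph_adj_getVert p (by omega)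
        rw [hpget i (by omega), hpget (i + 1) (by omega)] at h1
        exact Subgraph.sup_adj.mpr (Or.inr (by rw [Walk.toSubgraph_reverse]; exact h1))
      have hwtj : (Walk.cons hjadj p.reverse).toSubgraph.Adj t (F.getVert j) :=
        Subgraph.sup_adj.mpr (Or.inl (by simp; exact Or.inl rfl))
      -- a chord from t must go to v₁ or v_j
      have key : ∀ b : ℕ, 1 ≤ b → b ≤ j → G.Adj t (F.getVert b) →
          (Walk.cons hjadj p.reverse).toSubgraph.Adj t (F.getVert b) := by
        intro b hb1 hbj hadj
        rcases Nat.lt_or_ge b 2 with hb2 | hb2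
        · have : b = 1 := by omega
          subst this
          have := hwSub 0 (by omega)
          rwa [F.getVert_zero] at this
        · have h1 : j ≤ b := hjmin b hb2 (by omega) hadj
          have h2 : b = j := by omega
          rw [h2]
          exact hwtj
      intro x hx y hy hadj
      obtain ⟨a, haj, hax⟩ := (hmemw x).mp hx
      obtain ⟨b, hbj, hby⟩ := (hmemw y).mp hy
      subst hax hby
      rcases Nat.eq_zero_or_pos a with rfl | ha0
      · rw [F.getVert_zero] at hadj ⊢
        rcases Nat.eq_zero_or_pos b with rfl | hb0
        · rw [F.getVert_zero] at hadj; exact absurd rfl hadj.ne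
        · exact key b hb0 hbj hadj
      rcases Nat.eq_zero_or_pos b with rfl | hb0
      · rw [F.getVert_zero] at hadj ⊢
        exact (key a ha0 haj hadj.symm).symm
      · -- both interior: use that F is induced away from t
        have hxt : F.getVert a ≠ t := hnt a ha0 (by omega)
        have hyt : F.getVert b ≠ t := hnt b hb0 (by omega)
        have hxF : F.getVert a ∈ F.support :=
          Walk.mem_support_iff_exists_getVert.mpr ⟨a, rfl, by omega⟩
        have hyF : F.getVert b ∈ F.support :=
          Walk.mem_support_iff_exists_getVert.mpr ⟨b, rfl, by omega⟩
        have hFadj := hind _ hxF hxt _ hyF hyt hadj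
        obtain ⟨i, hie, hil⟩ := (Walk.toSubgraph_adj_iff F).mp hFadj
        rcases Sym2.eq_iff.mp hie with ⟨h1, h2⟩ | ⟨h1, h2⟩
        · have hi0 : 1 ≤ i := by
            rcases Nat.eq_zero_or_pos i with rfl | h; · rw [F.getVert_zero] at h1
                                                        exact absurd h1.symm hxt
            · exact h
          have hia : i = a := hinj i a hi0 (by omega) (by omega) (by omega) h1
          have hib : i + 1 = b := hinj (i + 1) b (by omega) (by omega) (by omega) (by omega) h2
          subst hia
          rw [← hib]
          exact hwSub i (by omega)
        · have hi0 : 1 ≤ i := by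
            rcases Nat.eq_zero_or_pos i with rfl | h; · rw [F.getVert_zero] at h1
                                                        exact absurd h1.symm hyt
            · exact h
          have hib : i = b := hinj i b hi0 (by omega) (by omega) (by omega) h1
          have hia : i + 1 = a := hinj (i + 1) a (by omega) (by omega) (by omega) (by omega) h2
          subst hib
          rw [← hia]
          exact (hwSub i (by omega)).symm
    · -- support containment
      intro x hx
      simp only [Walk.support_cons, List.mem_cons, Walk.support_reverse, List.mem_reverse] at hx
      rcases hx with rfl | hxp
      · exact F.start_mem_support
      · obtain ⟨i, hiv, hil⟩ := Walk.mem_support_iff_exists_getVert.mp hxp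
        rw [hplen] at hil
        rw [Walk.getVert_wtake F j i hil] at hiv
        exact Walk.mem_support_iff_exists_getVert.mpr ⟨i, hiv, by omega⟩
  · -- no chord at t: F itself is a long hole
    refine ⟨t, F, ⟨hcyc, hlen, ?_⟩, fun x hx => hx⟩
    have key : ∀ y ∈ F.support, y ≠ t → G.Adj t y → F.toSubgraph.Adj t y := by
      intro y hy hyt hadj
      obtain ⟨b, hbv, hbl⟩ := Walk.mem_support_iff_exists_getVert.mp hy
      have hb1 : 1 ≤ b := by
        rcases Nat.eq_zero_or_pos b with rfl | h
        · rw [F.getVert_zero] at hbv; exact absurd hbv.symm hyt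
        · exact h
      have hbn : b ≤ n - 1 := by
        rcases Nat.lt_or_ge b n with h | h
        · omega
        · have : b = n := by omega
          subst this
          rw [F.getVert_length] at hbv
          exact absurd hbv.symm hyt
      subst hbv
      rcases Nat.lt_or_ge b 2 with hb2 | hb2
      · have : b = 1 := by omega
        subst this
        have := Walk.toSubgraph_adj_getVert F (i := 0) (by omega)
        rwa [F.getVert_zero] at this
      rcases Nat.lt_or_ge b (n - 1) with hb3 | hb3
      · exact absurd ⟨b, hb2, by omega, hadj⟩ hch
      · have : b = n - 1 := by omega
        subst this
        have h1 := (Walk.toSubgraph_adj_getVert F (i := n - 1) (by omega)).symm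
        have h2 : n - 1 + 1 = n := by omega
        rw [h2, hn] at h1
        rwa [F.getVert_length] at h1
    intro x hx y hy hadj
    by_cases hxt : x = t
    · rw [hxt] at hadj ⊢
      by_cases hyt : y = t
      · rw [hyt] at hadj; exact absurd rfl hadj.ne
      · exact key y hy hyt hadj
    · by_cases hyt : y = t
      · rw [hyt] at hadj ⊢
        exact (key x hx hxt hadj.symm).symm
      · exact hind x hx hxt y hy hyt hadj
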